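/- Let Δx, Δt > 0, θ ∈ [0,1], and define the operator 𝒜_θ on ℓ²(ℤ) by (𝒜_θ a)_j = a_j + θΔt·D₊D₊D₋(a)_j, where D₊D₊D₋(a)_j = (a_{j+2} - 3a_{j+1} + 3a_j - a_{j-1})/Δx³. Then for every a ∈ ℓ²(ℤ): ‖a‖²_{ℓ²_Δ} ≤ ‖𝒜_θ a‖²_{ℓ²_Δ} ≤ (1 + (16θΔt/Δx³)(1 + 4θΔt/Δx³)) ‖a‖²_{ℓ²_Δ}. In particular 𝒜_θ is a continuous bijection of ℓ²(ℤ) whose inverse has operator norm at most 1. -/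

import Mathlib

open scoped ENNReal RealInnerProductSpace


noncomputable section
/-- `ℓ²(ℤ)` with real values. -/
abbrev L2Z := lp (fun _ : ℤ => ℝ) 2

/-- Third difference `D₊D₊D₋(a)_j = (a_{j+2} - 3a_{j+1} + 3a_j - a_{j-1})/Δx³`. -/
def D3 (Δx : ℝ) (a : ℤ → ℝ) (j : ℤ) : ℝ :=
  (a (j + 2) - 3 * a (j + 1) + 3 * a j - a (j - 1)) / Δx ^ 3

lemma shiftMem (a : L2Z) (n : ℤ) : Memℓp (fun j => (a : ℤ → ℝ) (j + n)) 2 := by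
  apply memℓp_gen
  have h := (lp.memℓp a).summable (p := 2) (by norm_num)
  exact ((Equiv.addRight n).summable_iff (f := fun i => ‖(a : ℤ → ℝ) i‖ ^ (2:ℝ≥0∞).toReal)).mpr h

def SL (n : ℤ) : L2Z →ₗ[ℝ] L2Z where
  toFun a := ⟨fun j => (a : ℤ → ℝ) (j + n), shiftMem a n⟩
  map_add' a b := by apply lp.ext; funext j; simp [lp.coeFn_add]; rfl
  map_smul' c a := by apply lp.ext; funext j; simp [lp.coeFn_smul]

@[simp] lemma SL_apply (n : ℤ) (a : L2Z) (j : ℤ) : (SL n a : ℤ → ℝ) j = (a : ℤ → ℝ) (j + n) := rfl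

lemma SL_SL (m n : ℤ) (a : L2Z) : SL m (SL n a) = SL (n + m) a := by
  apply lp.ext; funext j
  show (a : ℤ → ℝ) (j + m + n) = (a : ℤ → ℝ) (j + (n + m))
  rw [add_assoc, add_comm m n]

@[simp] lemma SL_zero (a : L2Z) : SL 0 a = a := by
  apply lp.ext; funext j; show (a : ℤ → ℝ) (j + 0) = _; rw [add_zero]

lemma inner_SL (n : ℤ) (a b : L2Z) : ⟪SL n a, b⟫ = ⟪a, SL (-n) b⟫ := by
  rw [lp.inner_eq_tsum, lp.inner_eq_tsum]
  have := (Equiv.addRight n).tsum_eq (f := fun k => ⟪(a : ℤ → ℝ) k, (SL (-n) b : ℤ → ℝ) k⟫)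
  rw [← this]
  congr 1; funext j
  simp [RCLike.inner_apply, add_neg_cancel_right]

lemma inner_SL' (n : ℤ) (a b : L2Z) : ⟪a, SL n b⟫ = ⟪SL (-n) a, b⟫ := by
  rw [inner_SL (-n) a b, neg_neg]

lemma inner_SL_SL (m n : ℤ) (a b : L2Z) : ⟪SL m a, SL n b⟫ = ⟪a, SL (n - m) b⟫ := by
  rw [inner_SL, SL_SL, ← sub_eq_add_neg]

lemma norm_SL (n : ℤ) (a : L2Z) : ‖SL n a‖ = ‖a‖ := by
  have h : ⟪SL n a, SL n a⟫ = ⟪a, a⟫ := by rw [inner_SL_SL]; simp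
  rw [real_inner_self_eq_norm_sq, real_inner_self_eq_norm_sq] at h
  nlinarith [norm_nonneg (SL n a), norm_nonneg a]

def S (n : ℤ) : L2Z →L[ℝ] L2Z :=
  (SL n).mkContinuous 1 (fun a => by rw [norm_SL, one_mul])

@[simp] lemma S_apply (n : ℤ) (a : L2Z) (j : ℤ) : (S n a : ℤ → ℝ) j = (a : ℤ → ℝ) (j + n) := rfl
lemma S_eq (n : ℤ) (a : L2Z) : S n a = SL n a := rfl

section Main
variable (κ : ℝ)

def Mop : L2Z →L[ℝ] L2Z :=
  S 2 - (3:ℝ) • S 1 + (3:ℝ) • ContinuousLinearMap.id ℝ L2Z - S (-1)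

lemma norm_S (n : ℤ) (a : L2Z) : ‖S n a‖ = ‖a‖ := norm_SL n a

lemma inner_self_S (n : ℤ) (a : L2Z) : ⟪S n a, S n a⟫ = ‖a‖ ^ 2 := by
  rw [S_eq, inner_SL_SL, sub_self, SL_zero, real_inner_self_eq_norm_sq]

lemma Mop_inner (a : L2Z) :
    ⟪a, Mop a⟫ = 3 * ‖a‖ ^ 2 - 4 * ⟪a, S 1 a⟫ + ⟪a, S 2 a⟫ := by
  have h2 : ⟪a, S (-1) a⟫ = ⟪a, S 1 a⟫ := by
    rw [S_eq, inner_SL' (-1) a a, neg_neg, ← S_eq, real_inner_comm]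
  simp only [Mop, ContinuousLinearMap.sub_apply, ContinuousLinearMap.add_apply,
    ContinuousLinearMap.smul_apply, ContinuousLinearMap.id_apply,
    inner_sub_right, inner_add_right, real_inner_smul_right,
    real_inner_self_eq_norm_sq, h2]
  ring

lemma Mop_inner_nonneg (a : L2Z) : 0 ≤ ⟪a, Mop a⟫ := by
  set q1 := ⟪a, S 1 a⟫ with hq1
  set q2 := ⟪a, S 2 a⟫ with hq2
  have h1 : ⟪S 1 a, a⟫ = q1 := real_inner_comm _ _
  have h2 : ⟪a, S (-1) a⟫ = q1 := by
    rw [S_eq, inner_SL' (-1) a a, neg_neg, ← S_eq, ← h1]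
  have h3 : ⟪S (-1) a, a⟫ = q1 := by rw [real_inner_comm, h2]
  have h4 : ⟪S 1 a, S (-1) a⟫ = q2 := by
    rw [S_eq, S_eq, inner_SL_SL]
    norm_num
    rw [inner_SL' (-2) a a]
    norm_num
    rw [← S_eq, real_inner_comm, ← hq2]
  have h5 : ⟪S (-1) a, S 1 a⟫ = q2 := by rw [real_inner_comm, h4]
  have key : ‖S 1 a - (2:ℝ) • a + S (-1) a‖ ^ 2 = 2 * ⟪a, Mop a⟫ := by
    rw [Mop_inner, ← real_inner_self_eq_norm_sq]
    simp only [inner_sub_left, inner_sub_right, inner_add_left, inner_add_right,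
      real_inner_smul_left, real_inner_smul_right, inner_self_S,
      real_inner_self_eq_norm_sq, h1, h2, h3, h4, h5, norm_S, norm_smul,
      Real.norm_ofNat]
    ring
  nlinarith [sq_nonneg ‖S 1 a - (2:ℝ) • a + S (-1) a‖]

lemma Mop_inner_le (a : L2Z) : ⟪a, Mop a⟫ ≤ 8 * ‖a‖ ^ 2 := by
  rw [Mop_inner]
  have c1 := neg_le_of_abs_le (abs_real_inner_le_norm a (S 1 a))
  have c2 := real_inner_le_norm a (S 2 a)
  rw [norm_S] at c1 c2
  nlinarith [sq_nonneg ‖a‖]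

lemma Mop_norm_le (a : L2Z) : ‖Mop a‖ ≤ 8 * ‖a‖ := by
  simp only [Mop, ContinuousLinearMap.sub_apply, ContinuousLinearMap.add_apply,
    ContinuousLinearMap.smul_apply, ContinuousLinearMap.id_apply]
  calc ‖S 2 a - (3:ℝ) • S 1 a + (3:ℝ) • a - S (-1) a‖
      ≤ ‖S 2 a - (3:ℝ) • S 1 a + (3:ℝ) • a‖ + ‖S (-1) a‖ := norm_sub_le _ _
    _ ≤ ‖S 2 a - (3:ℝ) • S 1 a‖ + ‖(3:ℝ) • a‖ + ‖S (-1) a‖ := by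
        gcongr; exact norm_add_le _ _
    _ ≤ ‖S 2 a‖ + ‖(3:ℝ) • S 1 a‖ + ‖(3:ℝ) • a‖ + ‖S (-1) a‖ := by
        gcongr; exact norm_sub_le _ _
    _ = 8 * ‖a‖ := by
        rw [norm_smul, norm_smul, norm_S, norm_S, norm_S]
        simp [Real.norm_eq_abs]; ring
end Main

lemma invertible_of_coercive (A : L2Z →L[ℝ] L2Z)
    (hlow : ∀ a, ‖a‖ ≤ ‖A a‖) (hAinner : ∀ a, ‖a‖ ^ 2 ≤ ⟪a, A a⟫) :
    Function.Bijective A ∧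
      ∃ B : L2Z →L[ℝ] L2Z, (∀ a, B (A a) = a) ∧ (∀ a, A (B a) = a) ∧ ‖B‖ ≤ 1 := by
  have hinj : Function.Injective A := by
    intro x y hxy
    have h : ‖x - y‖ ≤ ‖A (x - y)‖ := hlow _
    rw [map_sub, hxy, sub_self, norm_zero] at h
    have h2 := le_antisymm h (norm_nonneg _)
    rwa [norm_eq_zero, sub_eq_zero] at h2
  have hker : LinearMap.ker (A : L2Z →ₗ[ℝ] L2Z) = ⊥ := LinearMap.ker_eq_bot.2 hinj
  have hanti : AntilipschitzWith 1 A := by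
    apply AntilipschitzWith.of_le_mul_dist
    intro x y
    rw [dist_eq_norm, dist_eq_norm, ← map_sub]
    simpa using hlow (x - y)
  have hclosed' : IsClosed ((LinearMap.range (A : L2Z →ₗ[ℝ] L2Z) : Submodule ℝ L2Z) : Set L2Z) := by
    have h : ((LinearMap.range (A : L2Z →ₗ[ℝ] L2Z) : Submodule ℝ L2Z) : Set L2Z) = Set.range A := by
      ext x; simp [LinearMap.mem_range]
    rw [h]
    exact (hanti.isClosedEmbedding A.uniformContinuous).isClosed_range
  haveI : CompleteSpace (LinearMap.range (A : L2Z →ₗ[ℝ] L2Z) : Submodule ℝ L2Z) :=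
    hclosed'.completeSpace_coe
  have horth : (LinearMap.range (A : L2Z →ₗ[ℝ] L2Z) : Submodule ℝ L2Z)ᗮ = ⊥ := by
    rw [Submodule.eq_bot_iff]
    intro x hx
    have h0 : ⟪A x, x⟫ = 0 :=
      (Submodule.mem_orthogonal _ x).1 hx (A x) (LinearMap.mem_range.2 ⟨x, rfl⟩)
    have h1 : ‖x‖ ^ 2 ≤ ⟪x, A x⟫ := hAinner x
    rw [real_inner_comm, h0] at h1
    have h2 : ‖x‖ = 0 := by nlinarith [norm_nonneg x]
    rwa [norm_eq_zero] at h2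
  have hrange : LinearMap.range (A : L2Z →ₗ[ℝ] L2Z) = ⊤ := Submodule.orthogonal_eq_bot_iff.mp horth
  refine ⟨⟨hinj, LinearMap.range_eq_top.mp hrange⟩, ?_⟩
  set e := ContinuousLinearEquiv.ofBijective A hker hrange with hedef
  refine ⟨(e.symm : L2Z →L[ℝ] L2Z), ?_, ?_, ?_⟩
  · intro a
    show e.symm (A a) = a
    exact ContinuousLinearEquiv.ofBijective_symm_apply_apply A hker hrange a
  · intro a
    show A (e.symm a) = a
    exact ContinuousLinearEquiv.ofBijective_apply_symm_apply A hker hrange a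
  · apply ContinuousLinearMap.opNorm_le_bound _ zero_le_one
    intro y
    have h1 : A (e.symm y) = y :=
      ContinuousLinearEquiv.ofBijective_apply_symm_apply A hker hrange y
    have h2 := hlow (e.symm y)
    rw [h1, ← one_mul ‖y‖] at h2
    exact h2



/-- There is a continuous linear operator `𝒜_θ = I + θΔt D₊D₊D₋` on `ℓ²(ℤ)` satisfying
`Δx‖a‖² ≤ Δx‖𝒜_θ a‖² ≤ (1 + (16θΔt/Δx³)(1 + 4θΔt/Δx³)) Δx‖a‖²`; it is bijective and
its (continuous) inverse has operator norm at most `1`. -/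
theorem stmt13 (Δx Δt θ : ℝ) (hΔx : 0 < Δx) (hΔt : 0 < Δt)
    (hθ : θ ∈ Set.Icc (0:ℝ) 1) :
    ∃ A : L2Z →L[ℝ] L2Z,
      (∀ a : L2Z, ∀ j : ℤ, (A a : ∀ _ : ℤ, ℝ) j
          = (a : ∀ _ : ℤ, ℝ) j + θ * Δt * D3 Δx (a : ∀ _ : ℤ, ℝ) j) ∧
      (∀ a : L2Z,
        Δx * ‖a‖ ^ 2 ≤ Δx * ‖A a‖ ^ 2 ∧
        Δx * ‖A a‖ ^ 2
          ≤ (1 + (16 * θ * Δt / Δx ^ 3) * (1 + 4 * θ * Δt / Δx ^ 3)) * (Δx * ‖a‖ ^ 2)) ∧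
      Function.Bijective A ∧
      ∃ B : L2Z →L[ℝ] L2Z, (∀ a, B (A a) = a) ∧ (∀ a, A (B a) = a) ∧ ‖B‖ ≤ 1 := by
  have hΔx3 : (0:ℝ) < Δx ^ 3 := by positivity
  set κ : ℝ := θ * Δt / Δx ^ 3 with hκdef
  have hκ0 : 0 ≤ κ := div_nonneg (mul_nonneg hθ.1 hΔt.le) hΔx3.le
  set A : L2Z →L[ℝ] L2Z := ContinuousLinearMap.id ℝ L2Z + κ • Mop with hAdef
  -- basic formulas
  have hAapp : ∀ a : L2Z, A a = a + κ • Mop a := fun a => by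
    simp [hAdef]
  have hAnorm : ∀ a : L2Z,
      ‖A a‖ ^ 2 = ‖a‖ ^ 2 + 2 * κ * ⟪a, Mop a⟫ + κ ^ 2 * ‖Mop a‖ ^ 2 := by
    intro a
    rw [hAapp a, norm_add_sq_real, real_inner_smul_right, norm_smul,
      Real.norm_eq_abs, mul_pow, sq_abs]
    ring
  have hAinner : ∀ a : L2Z, ‖a‖ ^ 2 ≤ ⟪a, A a⟫ := by
    intro a
    rw [hAapp a, inner_add_right, real_inner_smul_right,
      real_inner_self_eq_norm_sq]
    nlinarith [Mop_inner_nonneg a]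
  have hsq : ∀ a : L2Z, ‖a‖ ^ 2 ≤ ‖A a‖ ^ 2 := by
    intro a
    rw [hAnorm a]
    nlinarith [Mop_inner_nonneg a, sq_nonneg κ, sq_nonneg ‖Mop a‖,
      mul_nonneg hκ0 (Mop_inner_nonneg a)]
  have hlow : ∀ a : L2Z, ‖a‖ ≤ ‖A a‖ := by
    intro a
    nlinarith [hsq a, norm_nonneg a, norm_nonneg (A a)]
  refine ⟨A, ?_, ?_, ?_, ?_⟩
  · -- pointwise formula
    intro a j
    have hMa : (Mop a : ℤ → ℝ) j
        = (a : ℤ → ℝ) (j + 2) - 3 * (a : ℤ → ℝ) (j + 1) + 3 * (a : ℤ → ℝ) j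
          - (a : ℤ → ℝ) (j - 1) := by
      have hj : j + (-1 : ℤ) = j - 1 := by ring
      simp only [Mop, ContinuousLinearMap.sub_apply, ContinuousLinearMap.add_apply,
        ContinuousLinearMap.smul_apply, ContinuousLinearMap.id_apply,
        lp.coeFn_sub, lp.coeFn_add, lp.coeFn_smul, Pi.sub_apply, Pi.add_apply,
        Pi.smul_apply, smul_eq_mul, S_apply, hj]
    have h1 : (A a : ℤ → ℝ) j = (a : ℤ → ℝ) j + κ * (Mop a : ℤ → ℝ) j := by
      rw [hAapp a]
      simp [lp.coeFn_add, lp.coeFn_smul]; rfl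
    rw [h1, hMa, D3, hκdef]
    ring
  · -- the two-sided bound
    intro a
    constructor
    · exact mul_le_mul_of_nonneg_left (hsq a) hΔx.le
    · have h16 : 16 * θ * Δt / Δx ^ 3 = 16 * κ := by rw [hκdef]; ring
      have h4 : 4 * θ * Δt / Δx ^ 3 = 4 * κ := by rw [hκdef]; ring
      rw [h16, h4]
      have hm2 : ‖Mop a‖ ^ 2 ≤ 64 * ‖a‖ ^ 2 := by
        nlinarith [Mop_norm_le a, norm_nonneg (Mop a), norm_nonneg a]
      have key : ‖A a‖ ^ 2 ≤ (1 + 16 * κ * (1 + 4 * κ)) * ‖a‖ ^ 2 := by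
        rw [hAnorm a]
        nlinarith [Mop_inner_le a, hm2, hκ0, sq_nonneg κ,
          mul_nonneg hκ0 hκ0, sq_nonneg ‖a‖,
          mul_le_mul_of_nonneg_left hm2 (mul_nonneg hκ0 hκ0),
          mul_le_mul_of_nonneg_left (Mop_inner_le a) hκ0]
      calc Δx * ‖A a‖ ^ 2 ≤ Δx * ((1 + 16 * κ * (1 + 4 * κ)) * ‖a‖ ^ 2) :=
            mul_le_mul_of_nonneg_left key hΔx.le
        _ = (1 + 16 * κ * (1 + 4 * κ)) * (Δx * ‖a‖ ^ 2) := by ring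
  · exact (invertible_of_coercive A hlow hAinner).1
  · exact (invertible_of_coercive A hlow hAinner).2

end
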